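/- Let n ≥ 1 be an integer and let x_1, …, x_n be pairwise distinct non-negative real numbers. For each i set a_i = (Π_{j≠i} x_j) / (Π_{j≠i} (x_j − x_i)). Then Π_{i=1}^n (1 + x_i)^{a_i} ≤ exp((1/n) Π_{i=1}^n x_i). -/

import Mathlib

open Finset Polynomial

-- key identity
lemma key_id (n : ℕ) (hn : 1 ≤ n) (x : Fin n → ℝ) (hinj : Function.Injective x)
    (s : ℝ) (hs : 0 < s) :
    ∑ i, (∏ j ∈ Finset.univ.erase i, (1 + s * x j)) / (∏ j ∈ Finset.univ.erase i, (x j - x i))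
      = s ^ (n - 1) := by
  have hne : (Finset.univ : Finset (Fin n)).Nonempty := by
    have : Nonempty (Fin n) := Fin.pos_iff_nonempty.1 hn
    exact univ_nonempty
  have h := Lagrange.sum_basis (v := x) hinj.injOn hne
  have h2 := congrArg (Polynomial.eval (-s⁻¹)) h
  rw [Polynomial.eval_finset_sum, Polynomial.eval_one] at h2
  have hterm : ∀ i : Fin n, Polynomial.eval (-s⁻¹) (Lagrange.basis Finset.univ x i)
      = (s⁻¹) ^ (n-1) * ((∏ j ∈ Finset.univ.erase i, (1 + s * x j)) /
        (∏ j ∈ Finset.univ.erase i, (x j - x i))) := by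
    intro i
    rw [Lagrange.basis, Polynomial.eval_prod]
    have hcard : (Finset.univ.erase i).card = n - 1 := by
      rw [card_erase_of_mem (mem_univ i), card_univ, Fintype.card_fin]
    calc ∏ j ∈ Finset.univ.erase i, Polynomial.eval (-s⁻¹) (Lagrange.basisDivisor (x i) (x j))
        = ∏ j ∈ Finset.univ.erase i, s⁻¹ * ((1 + s * x j) / (x j - x i)) := by
          apply Finset.prod_congr rfl
          intro j hj
          have hij : x j ≠ x i := fun h => (mem_erase.1 hj).1 (hinj h)
          have hd : x j - x i ≠ 0 := sub_ne_zero.2 hij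
          have hd' : x i - x j ≠ 0 := sub_ne_zero.2 (Ne.symm hij)
          have hsne : s ≠ 0 := ne_of_gt hs
          rw [Lagrange.basisDivisor]
          simp only [Polynomial.eval_mul, Polynomial.eval_C, Polynomial.eval_sub,
            Polynomial.eval_X]
          field_simp
          ring
      _ = (s⁻¹) ^ (n-1) * ((∏ j ∈ Finset.univ.erase i, (1 + s * x j)) /
            (∏ j ∈ Finset.univ.erase i, (x j - x i))) := by
          rw [Finset.prod_mul_distrib, Finset.prod_const, hcard, Finset.prod_div_distrib]
  rw [Finset.sum_congr rfl (fun i _ => hterm i), ← Finset.mul_sum] at h2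
  have hsne : s ≠ 0 := ne_of_gt hs
  have : (s⁻¹) ^ (n-1) ≠ 0 := pow_ne_zero _ (inv_ne_zero hsne)
  field_simp at h2 ⊢
  rw [one_div, inv_pow, inv_mul_eq_iff_eq_mul₀ (pow_ne_zero _ hsne), mul_one] at h2
  linarith [h2]

theorem prod_one_add_pow_le_exp (n : ℕ) (hn : 1 ≤ n) (x : Fin n → ℝ)
    (hx : ∀ i, 0 ≤ x i) (hinj : Function.Injective x) :
    ∏ i, (1 + x i) ^
        ((∏ j ∈ Finset.univ.erase i, x j) / (∏ j ∈ Finset.univ.erase i, (x j - x i))) ≤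
      Real.exp ((1 / n) * ∏ i, x i) := by
  by_cases hzero : ∃ k, x k = 0
  · obtain ⟨k, hk⟩ := hzero
    have hP : ∏ i, x i = 0 := Finset.prod_eq_zero (mem_univ k) hk
    rw [hP, mul_zero, Real.exp_zero]
    apply le_of_eq
    apply Finset.prod_eq_one
    intro i _
    by_cases hik : i = k
    · subst hik; rw [hk]; norm_num
    · have : (∏ j ∈ Finset.univ.erase i, x j) = 0 :=
        Finset.prod_eq_zero (mem_erase.2 ⟨fun h => hik h.symm, mem_univ k⟩) hk
      rw [this, zero_div, Real.rpow_zero]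
  · push_neg at hzero
    have hxpos : ∀ i, 0 < x i := fun i => lt_of_le_of_ne (hx i) (Ne.symm (hzero i))
    set P : ℝ := ∏ i, x i with hPdef
    have hPpos : 0 < P := Finset.prod_pos fun i _ => hxpos i
    set b : Fin n → ℝ := fun i => ∏ j ∈ Finset.univ.erase i, x j with hb
    set c : Fin n → ℝ := fun i => ∏ j ∈ Finset.univ.erase i, (x j - x i) with hc
    have hcne : ∀ i, c i ≠ 0 := by
      intro i
      apply Finset.prod_ne_zero_iff.2
      intro j hj
      exact sub_ne_zero.2 fun h => (mem_erase.1 hj).1 (hinj h)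
    have hbx : ∀ i, b i * x i = P := fun i => Finset.prod_erase_mul _ _ (mem_univ i)
    -- the function and its derivative
    set g : ℝ → ℝ := fun s => ∑ i, (b i / c i) * Real.log (1 + s * x i) with hg
    set g' : ℝ → ℝ := fun s => ∑ i, (b i / c i) * (x i / (1 + s * x i)) with hg'
    have hpos1 : ∀ s ∈ Set.Icc (0:ℝ) 1, ∀ i, (0:ℝ) < 1 + s * x i := by
      intro s hs i
      have : 0 ≤ s * x i := mul_nonneg hs.1 (hx i)
      linarith
    have hderiv : ∀ s ∈ Set.uIcc (0:ℝ) 1, HasDerivAt g (g' s) s := by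
      intro s hs
      rw [Set.uIcc_of_le zero_le_one] at hs
      apply HasDerivAt.fun_sum
      intro i _
      have h1 : HasDerivAt (fun t : ℝ => 1 + t * x i) (x i) s := by
        simpa using ((hasDerivAt_id s).mul_const (x i)).const_add 1
      exact (h1.log (ne_of_gt (hpos1 s hs i))).const_mul _
    have hcont : ContinuousOn g' (Set.Icc (0:ℝ) 1) := by
      apply continuousOn_finset_sum
      intro i _
      apply ContinuousOn.mul continuousOn_const
      apply ContinuousOn.div continuousOn_const
      · exact (continuous_const.add (continuous_id.mul continuous_const)).continuousOn
      · intro s hs; exact ne_of_gt (hpos1 s hs i)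
    have hint : IntervalIntegrable g' MeasureTheory.volume 0 1 := by
      apply ContinuousOn.intervalIntegrable
      rwa [Set.uIcc_of_le zero_le_one]
    -- pointwise bound on (0,1]
    have hbound : ∀ s ∈ Set.Ioc (0:ℝ) 1, g' s ≤ P * s ^ (n - 1) := by
      intro s hs
      have hsmem : s ∈ Set.Icc (0:ℝ) 1 := ⟨le_of_lt hs.1, hs.2⟩
      set Q : ℝ := ∏ i, (1 + s * x i) with hQ
      have hQpos : 0 < Q := Finset.prod_pos fun i _ => hpos1 s hsmem i
      have hQ1 : 1 ≤ Q := by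
        rw [hQ]
        have := Finset.prod_le_prod (s := Finset.univ) (f := fun _ : Fin n => (1:ℝ))
          (g := fun i => 1 + s * x i) (fun i _ => zero_le_one)
          (fun i _ => by have := mul_nonneg hsmem.1 (hx i); linarith)
        simpa using this
      have hterm : ∀ i : Fin n, (b i / c i) * (x i / (1 + s * x i)) =
          (P / Q) * ((∏ j ∈ Finset.univ.erase i, (1 + s * x j)) / c i) := by
        intro i
        have hQi : (∏ j ∈ Finset.univ.erase i, (1 + s * x j)) * (1 + s * x i) = Q :=
          Finset.prod_erase_mul _ _ (mem_univ i)
        have hpi : (0:ℝ) < 1 + s * x i := hpos1 s hsmem i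
        have hprodne : (∏ j ∈ Finset.univ.erase i, (1 + s * x j)) ≠ 0 := by
          apply ne_of_gt
          exact Finset.prod_pos fun j _ => hpos1 s hsmem j
        rw [div_mul_div_comm, div_mul_div_comm, hbx i,
          div_eq_div_iff (mul_ne_zero (hcne i) (ne_of_gt hpi))
            (mul_ne_zero (ne_of_gt hQpos) (hcne i)), ← hQi]
        ring
      have : g' s = (P / Q) * s ^ (n - 1) := by
        rw [hg']
        simp only []
        rw [Finset.sum_congr rfl fun i _ => hterm i, ← Finset.mul_sum,
          key_id n hn x hinj s hs.1]
      rw [this]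
      have h1 : P / Q ≤ P := by
        rw [div_le_iff₀ hQpos]
        nlinarith
      have h2 : (0:ℝ) ≤ s ^ (n - 1) := pow_nonneg (le_of_lt hs.1) _
      exact mul_le_mul_of_nonneg_right h1 h2
    -- integral comparison
    have hg0 : g 0 = 0 := by
      rw [hg]; simp
    have heq : ∫ s in (0:ℝ)..1, g' s = g 1 - g 0 :=
      intervalIntegral.integral_eq_sub_of_hasDerivAt hderiv hint
    have hint2 : IntervalIntegrable (fun s : ℝ => P * s ^ (n - 1)) MeasureTheory.volume 0 1 :=
      (continuous_const.mul (continuous_pow _)).intervalIntegrable 0 1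
    have hmono : (∫ s in (0:ℝ)..1, g' s) ≤ ∫ s in (0:ℝ)..1, P * s ^ (n - 1) := by
      apply intervalIntegral.integral_mono_ae_restrict zero_le_one hint hint2
      have h0 : ∀ᵐ (s : ℝ) ∂(MeasureTheory.volume.restrict (Set.Icc (0:ℝ) 1)),
          s ∈ Set.Icc (0:ℝ) 1 := MeasureTheory.ae_restrict_mem measurableSet_Icc
      have h1 : ∀ᵐ (s : ℝ) ∂(MeasureTheory.volume.restrict (Set.Icc (0:ℝ) 1)), s ≠ 0 := by
        refine MeasureTheory.ae_iff.2 ?_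
        have hset : {s : ℝ | ¬ s ≠ 0} = {0} := by ext t; simp
        rw [hset, MeasureTheory.Measure.restrict_apply (MeasurableSet.singleton 0)]
        exact MeasureTheory.measure_mono_null Set.inter_subset_left Real.volume_singleton
      filter_upwards [h0, h1] with s hmem hne
      exact hbound s ⟨lt_of_le_of_ne hmem.1 (Ne.symm hne), hmem.2⟩
    have hval : (∫ s in (0:ℝ)..1, P * s ^ (n - 1)) = (1 / n) * P := by
      rw [intervalIntegral.integral_const_mul, integral_pow]
      have hnn : (n - 1) + 1 = n := Nat.sub_add_cancel hn
      rw [hnn]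
      have : (n:ℝ) ≠ 0 := Nat.cast_ne_zero.2 (by omega)
      field_simp
      rw [Nat.cast_sub hn]
      simp [zero_pow (by omega : n ≠ 0)]
    have hg1 : g 1 ≤ (1 / n) * P := by
      have := hmono
      rw [heq, hg0, sub_zero, hval] at this
      exact this
    -- convert product to exp of sum
    have hfactor : ∀ i : Fin n, (1 + x i) ^ (b i / c i) = Real.exp ((b i / c i) * Real.log (1 + x i)) := by
      intro i
      rw [Real.rpow_def_of_pos (by linarith [hx i]), mul_comm]
    calc ∏ i, (1 + x i) ^ (b i / c i)
        = Real.exp (∑ i, (b i / c i) * Real.log (1 + x i)) := by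
          rw [Real.exp_sum]
          exact Finset.prod_congr rfl fun i _ => hfactor i
      _ ≤ Real.exp ((1 / n) * P) := by
          rw [Real.exp_le_exp]
          have hgg : g 1 = ∑ i, (b i / c i) * Real.log (1 + x i) := by
            simp only [hg, one_mul]
          rw [← hgg]; exact hg1
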